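/- Every (k₁,k₂)-covering map satisfies the unique path lifting property: if p : (E,e₀) → (B,b₀) is a pointed (k₁,k₂)-covering map, then every k₂-path f : [0,m]_ℤ → B with f(0) = b₀ has a unique lifting to a k₁-path f̃ : [0,m]_ℤ → E with f̃(0) = e₀ and p ∘ f̃ = f. -/

import Mathlib

/-- Digital k-neighborhood of radius 1: `x` together with all points adjacent to `x`. -/
def dnbhd {α : Type*} (A : α → α → Prop) (x : α) : Set α := {y | A x y} ∪ {x}

/-- Digital k-neighborhood of radius 2: points at adjacency-distance at most 2 from `x`. -/
def dnbhd2 {α : Type*} (A : α → α → Prop) (x : α) : Set α :=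
  {y | A x y ∨ ∃ z, A x z ∧ A z y} ∪ {x}

/-- Digital `(k₁,k₂)`-continuity: adjacent points map to equal or adjacent points. -/
def DigCont {α β : Type*} (A : α → α → Prop) (B : β → β → Prop) (f : α → β) : Prop :=
  ∀ x y, A x y → f x = f y ∨ B (f x) (f y)

/-- `f` restricted to `S` is a digital isomorphism onto `T`. -/
def IsoOn {α β : Type*} (A : α → α → Prop) (B : β → β → Prop) (f : α → β)
    (S : Set α) (T : Set β) : Prop :=
  Set.InjOn f S ∧ f '' S = T ∧
    ∀ a ∈ S, ∀ b ∈ S, a ≠ b → (A a b ↔ B (f a) (f b))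

/-- A `(k₁,k₂)`-isomorphism: a bijection, digitally continuous with digitally
continuous inverse. -/
def DigIso {α β : Type*} (A : α → α → Prop) (B : β → β → Prop) (f : α → β) : Prop :=
  ∃ g : β → α, Function.LeftInverse g f ∧ Function.RightInverse g f ∧
    DigCont A B f ∧ DigCont B A g

/-- A local `(k₁,k₂)`-isomorphism: each `N(x,1)` is mapped isomorphically onto `N(f x,1)`. -/
def LocalIso {α β : Type*} (A : α → α → Prop) (B : β → β → Prop) (f : α → β) : Prop :=
  ∀ x, IsoOn A B f (dnbhd A x) (dnbhd B (f x))

/-- A radius-2 local `(k₁,k₂)`-isomorphism. -/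
def R2LocalIso {α β : Type*} (A : α → α → Prop) (B : β → β → Prop) (f : α → β) : Prop :=
  ∀ x, IsoOn A B f (dnbhd2 A x) (dnbhd2 B (f x))

/-- `f` restricted to `S` is a digital isomorphism onto its image (weakly local condition). -/
def WLIsoOn {α β : Type*} (A : α → α → Prop) (B : β → β → Prop) (f : α → β)
    (S : Set α) : Prop :=
  Set.InjOn f S ∧ ∀ a ∈ S, ∀ b ∈ S, a ≠ b → (A a b ↔ B (f a) (f b))

/-- A weakly local (WL-) `(k₁,k₂)`-isomorphism. -/
def WLIso {α β : Type*} (A : α → α → Prop) (B : β → β → Prop) (f : α → β) : Prop :=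
  ∀ x, WLIsoOn A B f (dnbhd A x)

/-- A `(k₁,k₂)`-covering map (radius-1 version, Definition 5). -/
def CoveringMap {α β : Type*} (A : α → α → Prop) (B : β → β → Prop) (p : α → β) : Prop :=
  Function.Surjective p ∧ ∀ b : β,
    (p ⁻¹' dnbhd B b = ⋃ e ∈ {e | p e = b}, dnbhd A e) ∧
    ({e | p e = b} : Set α).Pairwise (fun e e' => Disjoint (dnbhd A e) (dnbhd A e')) ∧
    ∀ e, p e = b → IsoOn A B p (dnbhd A e) (dnbhd B b)

/-- The first (2012) version of a pseudo-`(k₁,k₂)`-covering map (Definition 8). -/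
def PseudoCovering1 {α β : Type*} (A : α → α → Prop) (B : β → β → Prop) (p : α → β) : Prop :=
  Function.Surjective p ∧ ∀ b : β, ∃ M : Set α, M.Nonempty ∧ (∀ e ∈ M, p e = b) ∧
    (p ⁻¹' dnbhd B b = ⋃ e ∈ M, dnbhd A e) ∧
    M.Pairwise (fun e e' => Disjoint (dnbhd A e) (dnbhd A e')) ∧
    ∀ e ∈ M, p '' dnbhd A e ⊆ dnbhd B b ∧ WLIsoOn A B p (dnbhd A e)

/-- The revised pseudo-`(k₁,k₂)`-covering map (Definition 10). -/
def PseudoCoveringR {α β : Type*} (A : α → α → Prop) (B : β → β → Prop) (p : α → β) : Prop :=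
  Function.Surjective p ∧ ∀ b : β, ∃ M : Set α, M.Nonempty ∧ (∀ e ∈ M, p e = b) ∧
    ((⋃ e ∈ M, dnbhd A e) ⊆ p ⁻¹' dnbhd B b) ∧
    M.Pairwise (fun e e' => Disjoint (dnbhd A e) (dnbhd A e')) ∧
    ∀ e ∈ M, p '' dnbhd A e ⊆ dnbhd B b ∧ WLIsoOn A B p (dnbhd A e)

/-- `k`-connectedness of a subset. -/
def DigConn {α : Type*} (A : α → α → Prop) (S : Set α) : Prop :=
  ∀ x ∈ S, ∀ y ∈ S, x ≠ y → ∃ (l : ℕ) (c : ℕ → α),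
    (∀ i ≤ l, c i ∈ S) ∧ c 0 = x ∧ c l = y ∧ ∀ i < l, A (c i) (c (i + 1))

/-- A digital path on `[0,m]` (consecutive values equal or adjacent). -/
def DigPathF {α : Type*} (A : α → α → Prop) {m : ℕ} (f : Fin (m + 1) → α) : Prop :=
  ∀ i : Fin m, f i.castSucc = f i.succ ∨ A (f i.castSucc) (f i.succ)

/-- 2-adjacency on ℤ. -/
def adjZ : ℤ → ℤ → Prop := fun x y => |x - y| = 1

/-- 2-adjacency on ℤ⁺ = ℕ. -/
def adjN : ℕ → ℕ → Prop := fun x y => y = x + 1 ∨ x = y + 1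

open Classical in
/-- Auxiliary recursive lift sequence. -/
noncomputable def liftSeq {E B' : Type*} (A : E → E → Prop) (p : E → B') (e₀ : E)
    (F : ℕ → B') : ℕ → E
  | 0 => e₀
  | n + 1 =>
      if h : ∃ e', e' ∈ dnbhd A (liftSeq A p e₀ F n) ∧ p e' = F (n + 1) then h.choose
      else e₀

/-- unique path lifting for `(k₁,k₂)`-covering maps. -/
theorem stmt10 {E B' : Type*} (A : E → E → Prop) (Ab : B' → B' → Prop)
    (hA : Symmetric A) (hAb : Symmetric Ab)
    (p : E → B') (e₀ : E) (b₀ : B') (hp : CoveringMap A Ab p) (hpe : p e₀ = b₀)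
    (m : ℕ) (f : Fin (m + 1) → B') (hf : DigPathF Ab f) (hf0 : f 0 = b₀) :
    ∃! g : Fin (m + 1) → E, DigPathF A g ∧ g 0 = e₀ ∧ p ∘ g = f := by
  obtain ⟨hsurj, hcov⟩ := hp
  set F : ℕ → B' := fun n => f ⟨min n m, by omega⟩ with hF
  set G : ℕ → E := liftSeq A p e₀ F with hG
  have hFval : ∀ n, ∀ h : n ≤ m, F n = f ⟨n, by omega⟩ := by
    intro n h
    simp only [hF]
    congr 1
    ext
    simp
    omega
  have hFadj : ∀ n, n < m → F (n + 1) ∈ dnbhd Ab (F n) := by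
    intro n hn
    have h0 := hf ⟨n, hn⟩
    have hc : (⟨n, hn⟩ : Fin m).castSucc = (⟨n, by omega⟩ : Fin (m + 1)) := rfl
    have hs : (⟨n, hn⟩ : Fin m).succ = (⟨n + 1, by omega⟩ : Fin (m + 1)) := rfl
    rw [hc, hs, ← hFval n (by omega), ← hFval (n + 1) hn] at h0
    rcases h0 with h | h
    · exact Or.inr h.symm
    · exact Or.inl h
  have hex : ∀ n, n < m → p (G n) = F n →
      ∃ e', e' ∈ dnbhd A (G n) ∧ p e' = F (n + 1) := by
    intro n hn hpn
    obtain ⟨_, him, _⟩ := (hcov (p (G n))).2.2 (G n) rfl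
    have : F (n + 1) ∈ dnbhd Ab (p (G n)) := hpn ▸ hFadj n hn
    rw [← him] at this
    obtain ⟨e', he', hpe'⟩ := this
    exact ⟨e', he', hpe'⟩
  have key : ∀ n, n ≤ m → p (G n) = F n := by
    intro n
    induction n with
    | zero =>
        intro _
        have : F 0 = b₀ := by
          have : (⟨min 0 m, by omega⟩ : Fin (m + 1)) = 0 := by
            ext; simp
          simp [hF, this, hf0]
        simp [hG, liftSeq, this, hpe]
    | succ n ih =>
        intro hn
        have hn' : n < m := by omega
        have hpn := ih (by omega)
        have h := hex n hn' hpn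
        have : G (n + 1) = h.choose := by
          simp only [hG, liftSeq]
          exact dif_pos h
        rw [this]
        exact h.choose_spec.2
  have hmem : ∀ n, n < m → G (n + 1) ∈ dnbhd A (G n) := by
    intro n hn
    have h := hex n hn (key n (by omega))
    have : G (n + 1) = h.choose := by
      simp only [hG, liftSeq]
      exact dif_pos h
    rw [this]
    exact h.choose_spec.1
  refine ⟨fun i => G i.val, ⟨?_, ?_, ?_⟩, ?_⟩
  · intro i
    have := hmem i.val i.isLt
    rcases this with h | h
    · exact Or.inr h
    · exact Or.inl h.symm
  · simp [hG, liftSeq]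
  · funext i
    have h1 := key i.val (by omega)
    have h2 : F i.val = f i := by
      rw [hFval i.val (by omega)]
    simp [Function.comp, h1, h2]
  · rintro g' ⟨hg'path, hg'0, hg'p⟩
    have heq : ∀ n, (hn : n ≤ m) → g' ⟨n, by omega⟩ = G n := by
      intro n
      induction n with
      | zero =>
          intro _
          have : (⟨0, by omega⟩ : Fin (m + 1)) = 0 := by ext; simp
          simp [this, hg'0, hG, liftSeq]
      | succ n ih =>
          intro hn
          have hn' : n < m := by omega
          have ihn := ih (by omega)
          obtain ⟨hinj, him, _⟩ := (hcov (p (G n))).2.2 (G n) rfl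
          have hm1 : g' ⟨n + 1, by omega⟩ ∈ dnbhd A (G n) := by
            have := hg'path ⟨n, hn'⟩
            have hc : Fin.castSucc ⟨n, hn'⟩ = (⟨n, by omega⟩ : Fin (m + 1)) := rfl
            have hs : Fin.succ ⟨n, hn'⟩ = (⟨n + 1, by omega⟩ : Fin (m + 1)) := rfl
            rw [hc, hs, ihn] at this
            rcases this with h | h
            · exact Or.inr h.symm
            · exact Or.inl h
          have hm2 : G (n + 1) ∈ dnbhd A (G n) := hmem n hn'
          have hp1 : p (g' ⟨n + 1, by omega⟩) = F (n + 1) := by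
            have := congrFun hg'p ⟨n + 1, by omega⟩
            simp only [Function.comp] at this
            rw [this, hFval (n + 1) hn]
          have hp2 : p (G (n + 1)) = F (n + 1) := key (n + 1) hn
          exact hinj hm1 hm2 (by rw [hp1, hp2])
    funext i
    have := heq i.val (by omega)
    have h : (⟨i.val, by omega⟩ : Fin (m + 1)) = i := by ext; rfl
    rw [h] at this
    exact this
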